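/- Let (X, μ) be a probability space and ρ, ρ₁, ρ₂ measurable semimetrics on X with ρ ≤ ρ₁ + ρ₂ almost everywhere with respect to μ × μ. Then for every ε > 0, ℍ_{4ε}(X, μ, ρ) ≤ ℍ_ε(X, μ, ρ₁) + ℍ_ε(X, μ, ρ₂), where ℍ_ε(X, μ, ρ) is the ε-entropy, defined as the binary logarithm of the smallest k such that X can be partitioned into measurable sets X₀, X₁, …, X_k with μ(X₀) < ε and diam_ρ(X_j) < ε for 1 ≤ j ≤ k (and +∞ if no such k exists). -/

import Mathlib

open MeasureTheory

variable {X : Type*} [MeasurableSpace X]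

/-- The set of positive integers k such that X can be partitioned into measurable sets
X₀, X₁, …, X_k with μ(X₀) < ε and each X_j (1 ≤ j ≤ k) of ρ-diameter less than ε. -/
def entWitness (μ : Measure X) (ρ : X → X → ℝ) (ε : ℝ) : Set ℕ :=
  {k | 1 ≤ k ∧ ∃ P : Fin (k + 1) → Set X,
    (∀ j, MeasurableSet (P j)) ∧
    Pairwise (Function.onFun Disjoint P) ∧
    (⋃ j, P j) = Set.univ ∧
    μ (P 0) < ENNReal.ofReal ε ∧
    ∀ j : Fin (k + 1), j ≠ 0 → ∀ x ∈ P j, ∀ y ∈ P j, ρ x y < ε}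

/-- The ε-entropy ℍ_ε(X, μ, ρ): the binary logarithm of the smallest k admitting such a
partition, and +∞ if no such k exists. -/
noncomputable def entH (μ : Measure X) (ρ : X → X → ℝ) (ε : ℝ) : ENNReal :=
  ⨅ (k : ℕ) (_ : k ∈ entWitness μ ρ ε), ENNReal.ofReal (Real.logb 2 k)

lemma entWitness_mul (μ : Measure X) [IsProbabilityMeasure μ]
    (ρ ρ₁ ρ₂ : X → X → ℝ)
    (hρs : ∀ x y, ρ x y = ρ y x)
    (hρt : ∀ x y z, ρ x z ≤ ρ x y + ρ y z)
    (hle : ∀ᵐ p ∂(μ.prod μ), ρ p.1 p.2 ≤ ρ₁ p.1 p.2 + ρ₂ p.1 p.2)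
    (hBmeas : MeasurableSet {p : X × X | ρ₁ p.1 p.2 + ρ₂ p.1 p.2 < ρ p.1 p.2})
    (ε : ℝ) (hε : 0 < ε)
    {k l : ℕ} (hk : k ∈ entWitness μ ρ₁ ε) (hl : l ∈ entWitness μ ρ₂ ε) :
    k * l ∈ entWitness μ ρ (4 * ε) := by
  obtain ⟨hk1, P, hPm, hPd, hPu, hP0, hPdiam⟩ := hk
  obtain ⟨hl1, Q, hQm, hQd, hQu, hQ0, hQdiam⟩ := hl
  set B : Set (X × X) := {p | ρ₁ p.1 p.2 + ρ₂ p.1 p.2 < ρ p.1 p.2} with hBdef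
  have hBnull : μ.prod μ B = 0 := by
    have h := hle
    rw [MeasureTheory.ae_iff] at h
    convert h using 2
    ext p
    simp only [hBdef, Set.mem_setOf_eq, not_le]
  have hGnull : ∀ᵐ x ∂μ, μ (Prod.mk x ⁻¹' B) = 0 :=
    (Measure.measure_prod_null hBmeas).mp hBnull
  set G : Set X := {x | μ (Prod.mk x ⁻¹' B) = 0} with hGdef
  have hGm : MeasurableSet G :=
    measurable_measure_prodMk_left hBmeas (measurableSet_singleton 0)
  have hGc : μ Gᶜ = 0 := by
    have h := hGnull
    rw [MeasureTheory.ae_iff] at h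
    exact h
  set S : Fin k × Fin l → Set X := fun p =>
    if μ (P p.1.succ ∩ Q p.2.succ) = 0 then ∅ else P p.1.succ ∩ Q p.2.succ ∩ G with hSdef
  have hSsub : ∀ p, S p ⊆ P p.1.succ ∩ Q p.2.succ := by
    intro p x hx
    simp only [hSdef] at hx
    split_ifs at hx with h
    · exact absurd hx (Set.notMem_empty x)
    · exact hx.1
  set e := finProdFinEquiv (m := k) (n := l) with hedef
  set R : Fin (k * l + 1) → Set X :=
    Fin.cons (⋃ p, S p)ᶜ (fun i => S (e.symm i)) with hRdef
  refine ⟨Nat.one_le_iff_ne_zero.mpr (Nat.mul_ne_zero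
    (Nat.one_le_iff_ne_zero.mp hk1) (Nat.one_le_iff_ne_zero.mp hl1)), R, ?_, ?_, ?_, ?_, ?_⟩
  · -- measurability
    intro j
    induction j using Fin.cases with
    | zero =>
      simp only [hRdef, Fin.cons_zero]
      refine (MeasurableSet.iUnion fun p => ?_).compl
      simp only [hSdef]
      split_ifs
      · exact MeasurableSet.empty
      · exact ((hPm _).inter (hQm _)).inter hGm
    | succ i =>
      simp only [hRdef, Fin.cons_succ, hSdef]
      split_ifs
      · exact MeasurableSet.empty
      · exact ((hPm _).inter (hQm _)).inter hGm
  · -- pairwise disjoint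
    have hSdisj : ∀ p p' : Fin k × Fin l, p ≠ p' → Disjoint (S p) (S p') := by
      intro p p' hne
      have : p.1 ≠ p'.1 ∨ p.2 ≠ p'.2 := by
        by_contra h
        push_neg at h
        exact hne (Prod.ext h.1 h.2)
      rcases this with h | h
      · exact Disjoint.mono ((hSsub p).trans Set.inter_subset_left)
          ((hSsub p').trans Set.inter_subset_left)
          (hPd (fun hc => h (Fin.succ_injective _ hc)))
      · exact Disjoint.mono ((hSsub p).trans Set.inter_subset_right)
          ((hSsub p').trans Set.inter_subset_right)
          (hQd (fun hc => h (Fin.succ_injective _ hc)))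
    intro a b hab
    induction a using Fin.cases with
    | zero =>
      induction b using Fin.cases with
      | zero => exact absurd rfl hab
      | succ i =>
        simp only [Function.onFun, hRdef, Fin.cons_zero, Fin.cons_succ]
        exact disjoint_compl_left.mono_right (Set.subset_iUnion S _)
    | succ i =>
      induction b using Fin.cases with
      | zero =>
        simp only [Function.onFun, hRdef, Fin.cons_zero, Fin.cons_succ]
        exact disjoint_compl_right.mono_left (Set.subset_iUnion S _)
      | succ i' =>
        simp only [Function.onFun, hRdef, Fin.cons_succ]
        refine hSdisj _ _ (fun hc => hab ?_)
        have : i = i' := by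
          have := congrArg e hc
          simpa using this
        rw [this]
  · -- cover
    rw [Set.eq_univ_iff_forall]
    intro x
    by_cases hx : x ∈ ⋃ p, S p
    · obtain ⟨p, hp⟩ := Set.mem_iUnion.mp hx
      refine Set.mem_iUnion.mpr ⟨(e p).succ, ?_⟩
      simp only [hRdef, Fin.cons_succ, Equiv.symm_apply_apply]
      exact hp
    · exact Set.mem_iUnion.mpr ⟨0, by simpa only [hRdef, Fin.cons_zero, Set.mem_compl_iff] using hx⟩
  · -- measure of junk piece
    have hR0 : R 0 ⊆ P 0 ∪ Q 0 ∪ Gᶜ ∪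
        ⋃ (p : Fin k × Fin l) (_ : μ (P p.1.succ ∩ Q p.2.succ) = 0),
          P p.1.succ ∩ Q p.2.succ := by
      intro x hx
      simp only [hRdef, Fin.cons_zero, Set.mem_compl_iff] at hx
      have hxP : ∃ i, x ∈ P i := Set.mem_iUnion.mp (hPu ▸ Set.mem_univ x)
      have hxQ : ∃ j, x ∈ Q j := Set.mem_iUnion.mp (hQu ▸ Set.mem_univ x)
      obtain ⟨i, hiP⟩ := hxP
      obtain ⟨j, hjQ⟩ := hxQ
      by_cases hi0 : i = 0
      · exact Or.inl (Or.inl (Or.inl (hi0 ▸ hiP)))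
      by_cases hj0 : j = 0
      · exact Or.inl (Or.inl (Or.inr (hj0 ▸ hjQ)))
      obtain ⟨a, rfl⟩ := Fin.exists_succ_eq.mpr hi0
      obtain ⟨b, rfl⟩ := Fin.exists_succ_eq.mpr hj0
      by_cases hG : x ∈ G
      · by_cases hμ : μ (P a.succ ∩ Q b.succ) = 0
        · exact Or.inr (Set.mem_iUnion.mpr ⟨(a, b), Set.mem_iUnion.mpr ⟨hμ, hiP, hjQ⟩⟩)
        · exfalso
          apply hx
          refine Set.mem_iUnion.mpr ⟨(a, b), ?_⟩
          simp only [hSdef, if_neg hμ]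
          exact ⟨⟨hiP, hjQ⟩, hG⟩
      · exact Or.inl (Or.inr hG)
    calc μ (R 0) ≤ μ (P 0) + μ (Q 0) + μ Gᶜ +
          μ (⋃ (p : Fin k × Fin l) (_ : μ (P p.1.succ ∩ Q p.2.succ) = 0),
            P p.1.succ ∩ Q p.2.succ) := by
            refine (measure_mono hR0).trans ?_
            refine (measure_union_le _ _).trans ?_
            gcongr
            refine (measure_union_le _ _).trans ?_
            gcongr
            exact measure_union_le _ _
      _ = μ (P 0) + μ (Q 0) := by
            have hZ : μ (⋃ (p : Fin k × Fin l) (_ : μ (P p.1.succ ∩ Q p.2.succ) = 0),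
                P p.1.succ ∩ Q p.2.succ) = 0 :=
              measure_iUnion_null fun p => measure_iUnion_null fun h => h
            rw [hGc, hZ]
            simp
      _ < ENNReal.ofReal ε + ENNReal.ofReal ε := ENNReal.add_lt_add hP0 hQ0
      _ ≤ ENNReal.ofReal (4 * ε) := by
            rw [← ENNReal.ofReal_add hε.le hε.le]
            exact ENNReal.ofReal_le_ofReal (by linarith)
  · -- diameter bound
    intro j hj x hx y hy
    induction j using Fin.cases with
    | zero => exact absurd rfl hj
    | succ i =>
      simp only [hRdef, Fin.cons_succ, hSdef] at hx hy
      set p := e.symm i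
      split_ifs at hx hy with hμ
      · exact absurd hx (Set.notMem_empty x)
      obtain ⟨⟨hxP, hxQ⟩, hxG⟩ := hx
      obtain ⟨⟨hyP, hyQ⟩, hyG⟩ := hy
      have hxB : μ (Prod.mk x ⁻¹' B) = 0 := hxG
      have hyB : μ (Prod.mk y ⁻¹' B) = 0 := hyG
      have hAdiff : μ ((P p.1.succ ∩ Q p.2.succ) \
          (Prod.mk x ⁻¹' B ∪ Prod.mk y ⁻¹' B)) ≠ 0 := by
        rwa [measure_diff_null (measure_union_null hxB hyB)]
      obtain ⟨z, hzA, hzB⟩ := nonempty_of_measure_ne_zero hAdiff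
      have hzx : ρ x z ≤ ρ₁ x z + ρ₂ x z :=
        not_lt.mp fun h => hzB (Or.inl h)
      have hzy : ρ y z ≤ ρ₁ y z + ρ₂ y z :=
        not_lt.mp fun h => hzB (Or.inr h)
      have h1 : ρ₁ x z < ε := hPdiam p.1.succ (Fin.succ_ne_zero _) x hxP z hzA.1
      have h2 : ρ₂ x z < ε := hQdiam p.2.succ (Fin.succ_ne_zero _) x hxQ z hzA.2
      have h3 : ρ₁ y z < ε := hPdiam p.1.succ (Fin.succ_ne_zero _) y hyP z hzA.1
      have h4 : ρ₂ y z < ε := hQdiam p.2.succ (Fin.succ_ne_zero _) y hyQ z hzA.2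
      have : ρ x y ≤ ρ x z + ρ z y := hρt x z y
      rw [hρs z y] at this
      linarith

/-- If ρ, ρ₁, ρ₂ are measurable semimetrics with ρ ≤ ρ₁ + ρ₂ a.e. (μ×μ),
then ℍ_{4ε}(X,μ,ρ) ≤ ℍ_ε(X,μ,ρ₁) + ℍ_ε(X,μ,ρ₂) for every ε > 0. -/
theorem entH_subadditive (μ : Measure X) [IsProbabilityMeasure μ]
    (ρ ρ₁ ρ₂ : X → X → ℝ)
    (hρm : Measurable (Function.uncurry ρ))
    (hρ₁m : Measurable (Function.uncurry ρ₁))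
    (hρ₂m : Measurable (Function.uncurry ρ₂))
    (hρnn : ∀ x y, 0 ≤ ρ x y) (hρ₁nn : ∀ x y, 0 ≤ ρ₁ x y) (hρ₂nn : ∀ x y, 0 ≤ ρ₂ x y)
    (hρs : ∀ x y, ρ x y = ρ y x) (hρ₁s : ∀ x y, ρ₁ x y = ρ₁ y x)
    (hρ₂s : ∀ x y, ρ₂ x y = ρ₂ y x)
    (hρ0 : ∀ x, ρ x x = 0) (hρ₁0 : ∀ x, ρ₁ x x = 0) (hρ₂0 : ∀ x, ρ₂ x x = 0)
    (hρt : ∀ x y z, ρ x z ≤ ρ x y + ρ y z)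
    (hρ₁t : ∀ x y z, ρ₁ x z ≤ ρ₁ x y + ρ₁ y z)
    (hρ₂t : ∀ x y z, ρ₂ x z ≤ ρ₂ x y + ρ₂ y z)
    (hle : ∀ᵐ p ∂(μ.prod μ), ρ p.1 p.2 ≤ ρ₁ p.1 p.2 + ρ₂ p.1 p.2)
    (ε : ℝ) (hε : 0 < ε) :
    entH μ ρ (4 * ε) ≤ entH μ ρ₁ ε + entH μ ρ₂ ε := by
  have hBmeas : MeasurableSet {p : X × X | ρ₁ p.1 p.2 + ρ₂ p.1 p.2 < ρ p.1 p.2} :=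
    measurableSet_lt (hρ₁m.add hρ₂m) hρm
  have key : ∀ k ∈ entWitness μ ρ₁ ε, ∀ l ∈ entWitness μ ρ₂ ε,
      entH μ ρ (4 * ε) ≤
        ENNReal.ofReal (Real.logb 2 k) + ENNReal.ofReal (Real.logb 2 l) := by
    intro k hk l hl
    have hmem := entWitness_mul μ ρ ρ₁ ρ₂ hρs hρt hle hBmeas ε hε hk hl
    have h1 : entH μ ρ (4 * ε) ≤ ENNReal.ofReal (Real.logb 2 ((k * l : ℕ) : ℝ)) := by
      rw [entH]
      exact iInf₂_le (k * l) hmem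
    refine h1.trans_eq ?_
    have hk0 : (k : ℝ) ≠ 0 := Nat.cast_ne_zero.mpr (Nat.one_le_iff_ne_zero.mp hk.1)
    have hl0 : (l : ℝ) ≠ 0 := Nat.cast_ne_zero.mpr (Nat.one_le_iff_ne_zero.mp hl.1)
    have hk1 : (1 : ℝ) ≤ k := Nat.one_le_cast.mpr hk.1
    have hl1 : (1 : ℝ) ≤ l := Nat.one_le_cast.mpr hl.1
    rw [Nat.cast_mul, Real.logb_mul hk0 hl0,
      ENNReal.ofReal_add (Real.logb_nonneg one_lt_two hk1) (Real.logb_nonneg one_lt_two hl1)]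
  have heq : entH μ ρ₁ ε + entH μ ρ₂ ε =
      ⨅ (k : entWitness μ ρ₁ ε) (l : entWitness μ ρ₂ ε),
        (ENNReal.ofReal (Real.logb 2 (k : ℕ)) + ENNReal.ofReal (Real.logb 2 (l : ℕ))) := by
    rw [entH, entH, iInf_subtype', iInf_subtype', ENNReal.iInf_add]
    exact iInf_congr fun k => ENNReal.add_iInf
  rw [heq]
  exact le_iInf fun k => le_iInf fun l => key k k.2 l l.2
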